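/- Suppose g : ZMod M × ZMod N → ℂ satisfies Ĝ(u,v) = F̂(u,v) · Ĥ(u,v) for every (u,v), where F̂, Ĥ, Ĝ are the two-dimensional DFTs of f, h_e, g respectively. Then for all (m,n), g(m,n) = Σ_{i=0}^{J−1} Σ_{j=0}^{K−1} h(J−1−i, K−1−j) · f(m − (J−1) + i, n − (K−1) + j) (indices modulo M and N respectively); that is, the spatial-domain operation corresponding to the frequency-domain product uses the coordinate-reversed PSF h'(i,j) = h(J−1−i, K−1−j), with the corner element h'(J−1,K−1) rather than the symmetric center aligned with the processed pixel. -/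

import Mathlib

noncomputable def dft2 {M N : ℕ} [NeZero M] [NeZero N]
    (z : ZMod M × ZMod N → ℂ) (u : ZMod M) (v : ZMod N) : ℂ :=
  ∑ m : ZMod M, ∑ n : ZMod N,
    z (m, n) * Complex.exp (-2 * Real.pi * Complex.I * (u.val : ℂ) * (m.val : ℂ) / (M : ℂ))
      * Complex.exp (-2 * Real.pi * Complex.I * (v.val : ℂ) * (n.val : ℂ) / (N : ℂ))

open Finset Complex

/-! ### Auxiliary: roots of unity -/

noncomputable def zet (M : ℕ) : ℂ := Complex.exp (-2 * Real.pi * Complex.I / M)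

lemma zet_pow_M (M : ℕ) [NeZero M] : zet M ^ M = 1 := by
  rw [zet, ← Complex.exp_nat_mul]
  have hM : (M:ℂ) ≠ 0 := Nat.cast_ne_zero.mpr (NeZero.ne M)
  have : (M:ℂ) * (-2 * Real.pi * Complex.I / M) = -(2 * Real.pi * Complex.I) := by
    field_simp
  rw [this, Complex.exp_neg, Complex.exp_two_pi_mul_I, inv_one]

lemma zet_pow_mod (M : ℕ) [NeZero M] (t : ℕ) : zet M ^ t = zet M ^ (t % M) := by
  conv_lhs => rw [← Nat.mod_add_div t M, pow_add, pow_mul, zet_pow_M, one_pow, mul_one]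

lemma zet_val_add (M : ℕ) [NeZero M] (x y : ZMod M) :
    zet M ^ ((x + y).val) = zet M ^ x.val * zet M ^ y.val := by
  rw [← pow_add, ZMod.val_add, ← zet_pow_mod]

lemma kernel_eq (M : ℕ) [NeZero M] (u m : ZMod M) :
    Complex.exp (-2 * Real.pi * Complex.I * (u.val : ℂ) * (m.val : ℂ) / (M : ℂ))
      = zet M ^ ((u * m).val) := by
  rw [ZMod.val_mul, ← zet_pow_mod, zet, ← Complex.exp_nat_mul]
  congr 1
  push_cast
  ring

lemma zet_pow_ne_one (M : ℕ) [NeZero M] (a : ℕ) (h0 : 0 < a) (hM : a < M) :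
    zet M ^ a ≠ 1 := by
  rw [zet, ← Complex.exp_nat_mul]
  intro hc
  rw [Complex.exp_eq_one_iff] at hc
  obtain ⟨n, hn⟩ := hc
  have hM0 : (M:ℂ) ≠ 0 := Nat.cast_ne_zero.mpr (NeZero.ne M)
  have hpi : (Real.pi:ℂ) ≠ 0 := by exact_mod_cast Real.pi_ne_zero
  have hc0 : (2 * (Real.pi:ℂ) * Complex.I) ≠ 0 := by
    simp [Real.pi_ne_zero, Complex.I_ne_zero]
  field_simp at hn
  have key : ((-a : ℤ) : ℂ) = ((n * M : ℤ) : ℂ) := by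
    apply mul_right_cancel₀ hc0
    push_cast
    linear_combination (2 * (Real.pi:ℂ) * Complex.I) * hn
  have keyZ : (-a : ℤ) = n * M := by exact_mod_cast key
  have : (M:ℤ) ∣ (a:ℤ) := ⟨-n, by linarith⟩
  have : (M:ℤ) ≤ a := Int.le_of_dvd (by exact_mod_cast h0) this
  omega

lemma sum_zmod_eq_range (M : ℕ) [NeZero M] (φ : ℕ → ℂ) :
    ∑ u : ZMod M, φ u.val = ∑ i ∈ Finset.range M, φ i := by
  refine Finset.sum_nbij' (fun u => u.val) (fun t => (t : ZMod M)) ?_ ?_ ?_ ?_ ?_ <;>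
    simp_all [ZMod.val_lt, ZMod.val_cast_of_lt, ZMod.natCast_val, ZMod.val_natCast,
      Nat.mod_eq_of_lt]

lemma orth (M : ℕ) [NeZero M] (a : ZMod M) :
    ∑ u : ZMod M, zet M ^ ((u * a).val) = if a = 0 then (M:ℂ) else 0 := by
  have step : ∀ u : ZMod M, zet M ^ ((u * a).val) = (zet M ^ a.val) ^ u.val := by
    intro u
    rw [ZMod.val_mul, ← zet_pow_mod, ← pow_mul, mul_comm]
  simp only [step]
  rw [sum_zmod_eq_range M (fun i => (zet M ^ a.val) ^ i)]
  by_cases ha : a = 0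
  · simp [ha, ZMod.val_zero]
  · rw [if_neg ha]
    have hval : 0 < a.val := by
      rcases Nat.eq_zero_or_pos a.val with h | h
      · exact absurd ((ZMod.val_eq_zero a).mp h) ha
      · exact h
    have hne : zet M ^ a.val ≠ 1 := zet_pow_ne_one M a.val hval (ZMod.val_lt a)
    rw [geom_sum_eq hne]
    have : (zet M ^ a.val) ^ M = 1 := by
      rw [← pow_mul, mul_comm, pow_mul, zet_pow_M, one_pow]
    rw [this, sub_self, zero_div]

/-! ### General convolution and inversion -/

lemma conv_general {G : Type*} [AddCommGroup G] [Fintype G] (Z : G → ℂ)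
    (hZ : ∀ a b, Z (a + b) = Z a * Z b) (w f : G → ℂ) :
    ∑ p, (∑ q, w q * f (p - q)) * Z p = (∑ q, w q * Z q) * (∑ p, f p * Z p) := by
  rw [Finset.sum_mul_sum]
  simp only [Finset.sum_mul]
  rw [Finset.sum_comm]
  refine Finset.sum_congr rfl fun q _ => ?_
  rw [← Equiv.sum_comp (Equiv.addLeft q) (fun p => w q * f (p - q) * Z p)]
  refine Finset.sum_congr rfl fun p _ => ?_
  simp only [Equiv.coe_addLeft, add_sub_cancel_left, hZ]
  ring

lemma inv_general {G : Type*} [AddCommGroup G] [Fintype G] [DecidableEq G]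
    (c : ℂ) (hc : c ≠ 0) (W : G → G → ℂ)
    (hom : ∀ u p q, W u (p + q) = W u p * W u q)
    (horth : ∀ a, ∑ u, W u a = if a = 0 then c else 0)
    (z z' : G → ℂ) (heq : ∀ u, ∑ q, z q * W u q = ∑ q, z' q * W u q) :
    ∀ p, z p = z' p := by
  have key : ∀ (y : G → ℂ) (p : G),
      ∑ u, (∑ q, y q * W u q) * W u (-p) = y p * c := by
    intro y p
    calc ∑ u, (∑ q, y q * W u q) * W u (-p)
        = ∑ u, ∑ q, y q * (W u q * W u (-p)) := by
          refine Finset.sum_congr rfl fun u _ => ?_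
          rw [Finset.sum_mul]; exact Finset.sum_congr rfl fun q _ => by ring
      _ = ∑ q, ∑ u, y q * W u (q + -p) := by
          rw [Finset.sum_comm]
          exact Finset.sum_congr rfl fun q _ => Finset.sum_congr rfl fun u _ => by rw [hom]
      _ = ∑ q, y q * (if q + -p = 0 then c else 0) := by
          refine Finset.sum_congr rfl fun q _ => ?_
          rw [← Finset.mul_sum, horth]
      _ = y p * c := by
          rw [Finset.sum_eq_single p]
          · simp
          · intro q _ hq
            rw [if_neg (by intro hx; apply hq; linear_combination (norm := abel) hx), mul_zero]
          · intro hp; exact absurd (Finset.mem_univ p) hp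
  intro p
  have h1 := key z p
  have h2 := key z' p
  simp only [heq] at h1
  rw [h1] at h2
  exact mul_right_cancel₀ hc h2

/-! ### dft2 as a sum over the product group -/

noncomputable def Wker (M N : ℕ) [NeZero M] [NeZero N]
    (U P : ZMod M × ZMod N) : ℂ :=
  zet M ^ ((U.1 * P.1).val) * zet N ^ ((U.2 * P.2).val)

lemma dft2_eq_sum (M N : ℕ) [NeZero M] [NeZero N]
    (z : ZMod M × ZMod N → ℂ) (u : ZMod M) (v : ZMod N) :
    dft2 z u v = ∑ P : ZMod M × ZMod N, z P * Wker M N (u, v) P := by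
  rw [dft2, Fintype.sum_prod_type]
  refine Finset.sum_congr rfl fun m _ => Finset.sum_congr rfl fun n _ => ?_
  rw [kernel_eq, kernel_eq, Wker, mul_assoc]

lemma Wker_hom (M N : ℕ) [NeZero M] [NeZero N] (U P Q : ZMod M × ZMod N) :
    Wker M N U (P + Q) = Wker M N U P * Wker M N U Q := by
  simp only [Wker, Prod.fst_add, Prod.snd_add, mul_add, zet_val_add]
  ring

lemma Wker_orth (M N : ℕ) [NeZero M] [NeZero N] (A : ZMod M × ZMod N) :
    ∑ U : ZMod M × ZMod N, Wker M N U A = if A = 0 then ((M : ℂ) * N) else 0 := by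
  rw [Fintype.sum_prod_type]
  simp only [Wker]
  rw [← Finset.sum_mul_sum, orth, orth]
  by_cases h1 : A.1 = 0 <;> by_cases h2 : A.2 = 0 <;>
    simp [h1, h2, Prod.ext_iff]


lemma sum_zmod_trunc (M Jn : ℕ) [NeZero M] (hJ : Jn < M) (ps : ZMod M → ℂ)
    (h0 : ∀ a : ZMod M, Jn ≤ a.val → ps a = 0) :
    ∑ a : ZMod M, ps a = ∑ i : Fin Jn, ps ((i.val : ℕ) : ZMod M) := by
  have cast_val : ∀ a : ZMod M, ((a.val : ℕ) : ZMod M) = a := fun a =>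
    ZMod.natCast_rightInverse a
  calc ∑ a : ZMod M, ps a = ∑ a : ZMod M, ps ((a.val : ℕ) : ZMod M) := by
        exact Finset.sum_congr rfl fun a _ => by rw [cast_val]
    _ = ∑ t ∈ Finset.range M, ps ((t : ℕ) : ZMod M) :=
        sum_zmod_eq_range M (fun t => ps ((t : ℕ) : ZMod M))
    _ = ∑ t ∈ Finset.range Jn, ps ((t : ℕ) : ZMod M) := by
        refine (Finset.sum_subset (Finset.range_subset_range.2 hJ.le) fun t ht hnt => ?_).symm
        refine h0 _ ?_
        rw [ZMod.val_cast_of_lt (Finset.mem_range.mp ht)]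
        exact le_of_not_gt (fun hc => hnt (Finset.mem_range.mpr hc))
    _ = ∑ i : Fin Jn, ps ((i.val : ℕ) : ZMod M) :=
        (Fin.sum_univ_eq_sum_range (fun t => ps ((t : ℕ) : ZMod M)) Jn).symm

/-- If `Ĝ(u,v) = F̂(u,v)·Ĥ(u,v)` for all `(u,v)`, then the spatial-domain
operation uses the coordinate-reversed PSF `h'(i,j) = h(J−1−i, K−1−j)`, with the corner
element (not the symmetric center) aligned with the processed pixel. -/
theorem frequency_product_2d_gives_reversed_psf
    (M N J K : ℕ) [NeZero M] [NeZero N]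
    (hJodd : Odd J) (hKodd : Odd K) (hJM : J < M) (hKN : K < N)
    (f : ZMod M × ZMod N → ℂ) (h : Fin J × Fin K → ℂ)
    (he : ZMod M × ZMod N → ℂ)
    (hhe : ∀ (m : ZMod M) (n : ZMod N),
      he (m, n) = if hmn : m.val < J ∧ n.val < K
        then h (⟨m.val, hmn.1⟩, ⟨n.val, hmn.2⟩) else 0)
    (g : ZMod M × ZMod N → ℂ)
    (hfreq : ∀ (u : ZMod M) (v : ZMod N), dft2 g u v = dft2 f u v * dft2 he u v) :
    ∀ (m : ZMod M) (n : ZMod N),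
      g (m, n) = ∑ i : Fin J, ∑ j : Fin K,
        h (⟨J - 1 - i.val, by rcases hJodd with ⟨c, hc⟩; have := i.isLt; omega⟩,
           ⟨K - 1 - j.val, by rcases hKodd with ⟨c, hc⟩; have := j.isLt; omega⟩) *
          f (m - ((J - 1 : ℕ) : ZMod M) + ((i.val : ℕ) : ZMod M),
             n - ((K - 1 : ℕ) : ZMod N) + ((j.val : ℕ) : ZMod N)) := by
  -- the circular convolution of he with f
  set conv : ZMod M × ZMod N → ℂ := fun p => ∑ q : ZMod M × ZMod N, he q * f (p - q) with hconv
  have hMN0 : ((M : ℂ) * N) ≠ 0 := by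
    have hM : (M:ℂ) ≠ 0 := Nat.cast_ne_zero.mpr (NeZero.ne M)
    have hN : (N:ℂ) ≠ 0 := Nat.cast_ne_zero.mpr (NeZero.ne N)
    exact mul_ne_zero hM hN
  -- g = conv by Fourier inversion
  have hg : ∀ p : ZMod M × ZMod N, g p = conv p := by
    apply inv_general ((M:ℂ) * N) hMN0 (Wker M N) (Wker_hom M N) (Wker_orth M N)
    intro U
    have h1 : ∑ q : ZMod M × ZMod N, g q * Wker M N U q = dft2 g U.1 U.2 := by
      rw [dft2_eq_sum]
    have h2 : ∑ q : ZMod M × ZMod N, conv q * Wker M N U q = dft2 g U.1 U.2 := by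
      rw [hconv]
      rw [conv_general (Wker M N U) (Wker_hom M N U) he f]
      rw [hfreq U.1 U.2, dft2_eq_sum, dft2_eq_sum]
      ring
    rw [h1, h2]
  intro m n
  rw [hg (m, n)]
  -- compute the convolution
  have step1 : conv (m, n)
      = ∑ a : ZMod M, ∑ b : ZMod N, he (a, b) * f (m - a, n - b) := by
    show ∑ q : ZMod M × ZMod N, he q * f ((m, n) - q) = _
    rw [Fintype.sum_prod_type]
    rfl
  rw [step1]
  -- restrict to the support of he
  have step2 : ∑ a : ZMod M, ∑ b : ZMod N, he (a, b) * f (m - a, n - b)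
      = ∑ i : Fin J, ∑ j : Fin K,
          h (i, j) * f (m - ((i.val : ℕ) : ZMod M), n - ((j.val : ℕ) : ZMod N)) := by
    rw [sum_zmod_trunc M J hJM _ (fun a ha => ?_)]
    · refine Finset.sum_congr rfl fun i _ => ?_
      rw [sum_zmod_trunc N K hKN _ (fun b hb => ?_)]
      · refine Finset.sum_congr rfl fun j _ => ?_
        have hvi : ((i.val : ℕ) : ZMod M).val = i.val :=
          ZMod.val_cast_of_lt (lt_trans i.isLt hJM)
        have hvj : ((j.val : ℕ) : ZMod N).val = j.val :=
          ZMod.val_cast_of_lt (lt_trans j.isLt hKN)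
        rw [hhe]
        rw [dif_pos (by rw [hvi, hvj]; exact ⟨i.isLt, j.isLt⟩)]
        congr 1
        refine congrArg h (Prod.ext_iff.mpr ⟨Fin.ext ?_, Fin.ext ?_⟩) <;> simp [hvi, hvj]
      · rw [hhe, dif_neg]
        · ring
        · rintro ⟨-, h2⟩
          have hvi : ((i.val : ℕ) : ZMod M).val = i.val :=
            ZMod.val_cast_of_lt (lt_trans i.isLt hJM)
          omega
    · refine Finset.sum_eq_zero fun b _ => ?_
      rw [hhe, dif_neg]
      · ring
      · rintro ⟨h1, -⟩; omega
  rw [step2]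
  -- reindex the target via Fin.rev
  conv_rhs => rw [← Equiv.sum_comp (Fin.revPerm (n := J))]
  refine Finset.sum_congr rfl fun i _ => ?_
  conv_rhs => rw [← Equiv.sum_comp (Fin.revPerm (n := K))]
  refine Finset.sum_congr rfl fun j _ => ?_
  have hi : (Fin.revPerm i).val = J - 1 - i.val := by
    show (Fin.rev i).val = _
    rw [Fin.val_rev]
    omega
  have hj : (Fin.revPerm j).val = K - 1 - j.val := by
    show (Fin.rev j).val = _
    rw [Fin.val_rev]
    omega
  have hile : i.val ≤ J - 1 := by have := i.isLt; omega
  have hjle : j.val ≤ K - 1 := by have := j.isLt; omega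
  refine congrArg₂ (· * ·) (congrArg h (Prod.ext_iff.mpr ⟨Fin.ext ?_, Fin.ext ?_⟩))
    (congrArg f (Prod.ext_iff.mpr ⟨?_, ?_⟩))
  · show i.val = J - 1 - (Fin.revPerm i).val
    rw [hi]; omega
  · show j.val = K - 1 - (Fin.revPerm j).val
    rw [hj]; omega
  · show m - ((i.val : ℕ) : ZMod M) = m - ((J - 1 : ℕ) : ZMod M) + (((Fin.revPerm i).val : ℕ) : ZMod M)
    rw [hi, Nat.cast_sub hile]
    ring
  · show n - ((j.val : ℕ) : ZMod N) = n - ((K - 1 : ℕ) : ZMod N) + (((Fin.revPerm j).val : ℕ) : ZMod N)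
    rw [hj, Nat.cast_sub hjle]
    ring
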